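/- arXiv:2309.04029 — 2 statements merged into one kernel-verified Lean document; each statement's English description precedes it below -/
import Mathlib

section
/- Let n ≥ 1, 0 < b < min{n,2}, and α₀ < α < 2*_b with α₀ the positive root of nα² + (n−2+2b)α − 4 + 2b = 0. Set r = n(α+2)/(n−b) and p a complex number with Re p = (2−b)/α. Then 0 < Re p < n and r > max{ n/(Re p), n/(n − Re p) }. -/
/-- for `n ≥ 1`, `0 < b < min{n,2}`, `α₀ < α < 2*_b`, `r = n(α+2)/(n−b)`
and `p ∈ ℂ` with `Re p = (2−b)/α`, one has `0 < Re p < n` and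
`r > max{ n/(Re p), n/(n − Re p) }`. -/
theorem stmt17 (n : ℕ) (hn : 1 ≤ n) (b α α₀ : ℝ)
    (hb : 0 < b) (hb2 : b < 2) (hbn : b < n)
    (hα₀pos : 0 < α₀)
    (hroot : (n : ℝ) * α₀ ^ 2 + ((n : ℝ) - 2 + 2 * b) * α₀ - 4 + 2 * b = 0)
    (hαlow : α₀ < α)
    (hαhigh : 3 ≤ n → α < (4 - 2 * b) / ((n : ℝ) - 2))
    (r : ℝ) (hr : r = (n : ℝ) * (α + 2) / ((n : ℝ) - b))
    (p : ℂ) (hp : p.re = (2 - b) / α) :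
    0 < p.re ∧ p.re < n ∧ r > max ((n : ℝ) / p.re) ((n : ℝ) / ((n : ℝ) - p.re)) := by
  have hn1 : (1:ℝ) ≤ (n:ℝ) := by exact_mod_cast hn
  have hα0 : 0 < α := hα₀pos.trans hαlow
  have h2b : 0 < 2 - b := by linarith
  have hnb : 0 < (n:ℝ) - b := by linarith
  have hnpos : 0 < (n:ℝ) := by linarith
  have hsumpos : 0 < (n:ℝ) * α₀ + ((n:ℝ) - 2 + 2 * b) := by
    by_contra h
    push_neg at h
    nlinarith [mul_nonpos_of_nonneg_of_nonpos hα₀pos.le h]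
  have hQ : 0 < (n:ℝ) * α ^ 2 + ((n:ℝ) - 2 + 2 * b) * α - 4 + 2 * b := by
    have hfac : 0 < (α - α₀) * ((n:ℝ) * α + ((n:ℝ) * α₀ + ((n:ℝ) - 2 + 2 * b))) :=
      mul_pos (sub_pos.mpr hαlow) (by nlinarith [mul_pos hnpos hα0])
    nlinarith [hfac]
  have hpre : 0 < p.re := by rw [hp]; positivity
  have hnα : 2 - b < (n:ℝ) * α := by
    by_contra h
    push_neg at h
    nlinarith [mul_le_mul_of_nonneg_right h hα0.le, mul_pos hnb hα0]
  have hpren : p.re < n := by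
    rw [hp, div_lt_iff₀ hα0]; nlinarith
  have hkey : ((n:ℝ) - 2) * α < 4 - 2 * b := by
    rcases le_or_gt (n:ℝ) 2 with h | h
    · nlinarith
    · have h2 : 2 < n := by exact_mod_cast h
      have h3 : 3 ≤ n := by omega
      have := hαhigh h3
      rw [lt_div_iff₀ (by linarith : (0:ℝ) < (n:ℝ) - 2)] at this
      linarith [this]
  have hineq1 : (n:ℝ) / p.re < r := by
    rw [div_lt_iff₀ hpre, hp, hr, div_mul_div_comm, lt_div_iff₀ (mul_pos hnb hα0)]
    nlinarith [mul_lt_mul_of_pos_left hkey hnpos]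
  have hsub : (n:ℝ) - p.re = ((n:ℝ) * α - (2 - b)) / α := by
    rw [hp]; field_simp
  have hineq2 : (n:ℝ) / ((n:ℝ) - p.re) < r := by
    rw [div_lt_iff₀ (by linarith : 0 < (n:ℝ) - p.re), hsub, hr, div_mul_div_comm,
      lt_div_iff₀ (mul_pos hnb hα0)]
    nlinarith [mul_pos hnpos hQ]
  exact ⟨hpre, hpren, max_lt hineq1 hineq2⟩
end

section
/- Let n ≥ 1, 0 < b < 2, α₀ < α < 2*_b, β = (4−2b−α(n−2))/(2α(α+2)), r = n(α+2)/(n−b), with r' its Hölder conjugate. Then (n/2)(1/r' − 1/r) < 1 and β(α+1) + (n/2)(1/r' − 1/r) − 1 > 0 (so both arguments of the Beta function B(1 − (n/2)(1/r'−1/r), β(α+1) + (n/2)(1/r'−1/r) − 1) appearing in the scattering estimate are positive). -/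
/-- with `α₀ < α < 2*_b`, `β = (4−2b−α(n−2))/(2α(α+2))`,
`r = n(α+2)/(n−b)` and `1/r + 1/r' = 1`, both `(n/2)(1/r'−1/r) < 1` and
`β(α+1) + (n/2)(1/r'−1/r) − 1 > 0`. -/
theorem stmt18 (n : ℕ) (hn : 1 ≤ n) (b α α₀ β r r' : ℝ)
    (hb : 0 < b) (hb2 : b < 2) (hbn : b < n)
    (hα₀pos : 0 < α₀)
    (hroot : (n : ℝ) * α₀ ^ 2 + ((n : ℝ) - 2 + 2 * b) * α₀ - 4 + 2 * b = 0)
    (hαlow : α₀ < α)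
    (hαhigh : 3 ≤ n → α < (4 - 2 * b) / ((n : ℝ) - 2))
    (hβ : β = (4 - 2 * b - α * ((n : ℝ) - 2)) / (2 * α * (α + 2)))
    (hr : r = (n : ℝ) * (α + 2) / ((n : ℝ) - b))
    (hr' : 1 / r + 1 / r' = 1) :
    (n : ℝ) / 2 * (1 / r' - 1 / r) < 1 ∧
      0 < β * (α + 1) + (n : ℝ) / 2 * (1 / r' - 1 / r) - 1 := by
  have hnR : (0:ℝ) < n := by positivity
  have hα : 0 < α := lt_trans hα₀pos hαlow
  have hα2 : (0:ℝ) < α + 2 := by linarith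
  have hnb : (0:ℝ) < (n:ℝ) - b := by linarith
  have hkey : α * ((n:ℝ) - 2) < 4 - 2 * b := by
    rcases le_or_gt 3 n with h3 | h3
    · have hn2 : (0:ℝ) < (n:ℝ) - 2 := by
        have : (3:ℝ) ≤ (n:ℝ) := by exact_mod_cast h3
        linarith
      have h := hαhigh h3
      calc α * ((n:ℝ) - 2) < (4 - 2*b) / ((n:ℝ) - 2) * ((n:ℝ) - 2) :=
            mul_lt_mul_of_pos_right h hn2
        _ = 4 - 2*b := by field_simp
    · have hle : (n:ℝ) ≤ 2 := by
        have : n ≤ 2 := by omega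
        exact_mod_cast this
      nlinarith
  have h1r : 1 / r = ((n:ℝ) - b) / ((n:ℝ) * (α + 2)) := by
    rw [hr, one_div_div]
  have h1r' : 1 / r' = 1 - ((n:ℝ) - b) / ((n:ℝ) * (α + 2)) := by
    linarith [hr', h1r.symm.le]
  have hden : (0:ℝ) < (n:ℝ) * (α + 2) := by positivity
  have hq : ((n:ℝ) - b) / ((n:ℝ) * (α + 2)) * ((n:ℝ) * (α + 2)) = (n:ℝ) - b :=
    div_mul_cancel₀ _ (ne_of_gt hden)
  rw [h1r, h1r', hβ]
  constructor
  · nlinarith [hq, hden, hkey, hnR]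
  · have hβpos : (0:ℝ) < 2 * α * (α + 2) := by positivity
    have hβmul : (4 - 2 * b - α * ((n:ℝ) - 2)) / (2 * α * (α + 2)) * (2 * α * (α + 2))
        = 4 - 2 * b - α * ((n:ℝ) - 2) := div_mul_cancel₀ _ (ne_of_gt hβpos)
    nlinarith [hq, hden, hkey, hβmul, hβpos, mul_pos hβpos hden]
end
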